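/- In BS(1,m) with m ≥ 2 and r ≥ 1, the elements a^(mʳ) and a are conjugate, and every element g with g⁻¹ a^(mʳ) g = a satisfies g = bʳ up to the description g = b⁻ʲaˡbᵏ with k − j = r; in particular the shortest conjugator has word length r. -/

import Mathlib

/-- The relator of the solvable Baumslag–Solitar group `BS(1,m)`:
`b a b⁻¹ a⁻ᵐ`, in the free group on two generators (`0 ↦ a`, `1 ↦ b`). -/
def BSrel (m : ℕ) : Set (FreeGroup (Fin 2)) :=
  {FreeGroup.of 1 * FreeGroup.of 0 * (FreeGroup.of 1)⁻¹ * (FreeGroup.of 0 ^ m)⁻¹}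

/-- The Baumslag–Solitar group `BS(1,m) = ⟨a, b ∣ b a b⁻¹ = aᵐ⟩`. -/
abbrev BS (m : ℕ) := PresentedGroup (BSrel m)

/-- The generator `a` of `BS(1,m)`. -/
def aBS (m : ℕ) : BS m := PresentedGroup.of 0

/-- The generator `b` of `BS(1,m)`. -/
def bBS (m : ℕ) : BS m := PresentedGroup.of 1

/-- The generating set `{a, b}` of `BS(1,m)`. -/
def genBS (m : ℕ) : Set (BS m) := {aBS m, bBS m}

/-- Word length of `g` with respect to a generating set `S`. -/
noncomputable def wordLength {G : Type*} [Group G] (S : Set G) (g : G) : ℕ :=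
  sInf {n | ∃ l : List G, (∀ x ∈ l, x ∈ S ∨ x⁻¹ ∈ S) ∧ l.prod = g ∧ l.length = n}

-- auxiliary

lemma addLeft_pow_apply (n : ℕ) : ∀ x : ℚ,
    ((Equiv.addLeft (1 : ℚ)) ^ n) x = n + x := by
  induction n with
  | zero => intro x; simp
  | succ n ih =>
    intro x
    rw [pow_succ, Equiv.Perm.mul_apply, ih ((Equiv.addLeft (1 : ℚ)) x)]
    show (n : ℚ) + (1 + x) = _
    push_cast; ring

noncomputable def BSphi (m : ℕ) (hm : (m : ℚ) ≠ 0) : BS m →* Equiv.Perm ℚ :=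
  PresentedGroup.toGroup
    (f := ![Equiv.addLeft (1 : ℚ), Equiv.mulLeft₀ (m : ℚ) hm]) (by
    rintro r hr
    rcases Set.mem_singleton_iff.mp hr with rfl
    simp only [map_mul, map_inv, map_pow, FreeGroup.lift_apply_of, Matrix.cons_val_zero,
      Matrix.cons_val_one, Matrix.head_cons]
    rw [mul_inv_eq_one]
    ext x
    simp [Equiv.Perm.mul_apply, addLeft_pow_apply, hm]
    rw [mul_add, mul_one, mul_inv_cancel_left₀ hm])

def BSbeta (m : ℕ) : BS m →* Multiplicative ℤ :=
  PresentedGroup.toGroup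
    (f := ![(1 : Multiplicative ℤ), Multiplicative.ofAdd 1]) (by
    rintro r hr
    rcases Set.mem_singleton_iff.mp hr with rfl
    simp)

def bexp (m : ℕ) (g : BS m) : ℤ := Multiplicative.toAdd (BSbeta m g)

@[simp] lemma BSphi_a (m : ℕ) (hm : (m : ℚ) ≠ 0) :
    BSphi m hm (aBS m) = Equiv.addLeft (1 : ℚ) := by
  simp [BSphi, aBS, PresentedGroup.toGroup.of]

@[simp] lemma BSphi_b (m : ℕ) (hm : (m : ℚ) ≠ 0) :
    BSphi m hm (bBS m) = Equiv.mulLeft₀ (m : ℚ) hm := by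
  simp [BSphi, bBS, PresentedGroup.toGroup.of]

@[simp] lemma bexp_a (m : ℕ) : bexp m (aBS m) = 0 := by
  simp [bexp, BSbeta, aBS, PresentedGroup.toGroup.of]

@[simp] lemma bexp_b (m : ℕ) : bexp m (bBS m) = 1 := by
  simp [bexp, BSbeta, bBS, PresentedGroup.toGroup.of]

@[simp] lemma bexp_one (m : ℕ) : bexp m 1 = 0 := by simp [bexp]

@[simp] lemma bexp_mul (m : ℕ) (g h : BS m) :
    bexp m (g * h) = bexp m g + bexp m h := by simp [bexp]

@[simp] lemma bexp_inv (m : ℕ) (g : BS m) : bexp m g⁻¹ = -bexp m g := by simp [bexp]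

@[simp] lemma bexp_pow (m : ℕ) (g : BS m) (n : ℕ) : bexp m (g ^ n) = n * bexp m g := by
  simp [bexp, mul_comm]

@[simp] lemma bexp_zpow (m : ℕ) (g : BS m) (n : ℤ) : bexp m (g ^ n) = n * bexp m g := by
  simp [bexp, mul_comm]

lemma BS_affine (m : ℕ) (hm : (m : ℚ) ≠ 0) (g : BS m) :
    ∃ c : ℚ, ∀ x : ℚ, BSphi m hm g x = (m : ℚ) ^ (bexp m g) * x + c := by
  induction g using PresentedGroup.induction_on with
  | H z =>
    induction z using FreeGroup.induction_on with
    | C1 => exact ⟨0, fun x => by simp⟩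
    | of i =>
      have hi : i = 0 ∨ i = 1 := by fin_cases i <;> simp
      rcases hi with rfl | rfl
      · refine ⟨1, fun x => ?_⟩
        rw [show (PresentedGroup.mk (BSrel m) (FreeGroup.of 0) : BS m) = aBS m from rfl, BSphi_a, bexp_a]
        simp [add_comm]
      · refine ⟨0, fun x => ?_⟩
        rw [show (PresentedGroup.mk (BSrel m) (FreeGroup.of 1) : BS m) = bBS m from rfl, BSphi_b, bexp_b]
        simp
    | inv_of i ih =>
      obtain ⟨c, hc⟩ := ih
      rw [map_inv]
      set g : BS m := PresentedGroup.mk (BSrel m) (FreeGroup.of i) with hg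
      refine ⟨-c / (m : ℚ) ^ (bexp m g), fun x => ?_⟩
      have key : BSphi m hm g ((m : ℚ) ^ (bexp m g⁻¹) * x + -c / (m : ℚ) ^ (bexp m g)) = x := by
        rw [hc, bexp_inv, zpow_neg]
        have hs : (m : ℚ) ^ (bexp m g) ≠ 0 := zpow_ne_zero _ hm
        field_simp
        ring
      rw [map_inv, Equiv.Perm.inv_def, Equiv.symm_apply_eq]
      exact key.symm
    | mul z w ihz ihw =>
      obtain ⟨cz, hz⟩ := ihz
      obtain ⟨cw, hw⟩ := ihw
      rw [map_mul]
      refine ⟨(m : ℚ) ^ (bexp m (PresentedGroup.mk (BSrel m) z)) * cw + cz, fun x => ?_⟩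
      rw [map_mul, bexp_mul, Equiv.Perm.mul_apply, hw, hz, zpow_add₀ hm]
      ring

lemma conj_bexp (m r : ℕ) (hm : 2 ≤ m) (g : BS m)
    (h : g⁻¹ * aBS m ^ (m ^ r) * g = aBS m) : bexp m g = r := by
  have hmQ : (m : ℚ) ≠ 0 := by positivity
  have hm1 : (1 : ℚ) < (m : ℚ) := by exact_mod_cast Nat.lt_of_lt_of_le one_lt_two hm
  obtain ⟨c, hc⟩ := BS_affine m hmQ g
  have h2 : aBS m ^ (m ^ r) * g = g * aBS m := by
    calc aBS m ^ (m ^ r) * g = g * (g⁻¹ * aBS m ^ (m ^ r) * g) := by group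
    _ = g * aBS m := by rw [h]
  have h3 := congrArg (BSphi m hmQ) h2
  rw [map_mul, map_mul, map_pow, BSphi_a] at h3
  have h4 := congrArg (fun e : Equiv.Perm ℚ => e 0) h3
  simp only [Equiv.Perm.mul_apply] at h4
  rw [hc 0, addLeft_pow_apply, hc (Equiv.addLeft (1:ℚ) 0)] at h4
  have h5 : (Equiv.addLeft (1:ℚ)) 0 = 1 := by simp
  rw [h5] at h4
  have h6 : ((m ^ r : ℕ) : ℚ) = (m : ℚ) ^ ((r : ℤ)) := by push_cast; norm_num
  have h7 : (m : ℚ) ^ ((r : ℤ)) = (m : ℚ) ^ (bexp m g) := by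
    rw [← h6]; linarith [h4]
  exact (zpow_right_injective₀ (by positivity) (ne_of_gt hm1) h7).symm

lemma BS_rel (m : ℕ) : bBS m * aBS m * (bBS m)⁻¹ = aBS m ^ m := by
  have h1 : PresentedGroup.mk (BSrel m)
      (FreeGroup.of 1 * FreeGroup.of 0 * (FreeGroup.of 1)⁻¹ * (FreeGroup.of 0 ^ m)⁻¹) = 1 := by
    apply (QuotientGroup.eq_one_iff _).mpr
    exact Subgroup.subset_normalClosure (Set.mem_singleton _)
  rw [map_mul, map_mul, map_mul, map_inv, map_inv, map_pow] at h1
  have ha : PresentedGroup.mk (BSrel m) (FreeGroup.of 0) = aBS m := rfl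
  have hb : PresentedGroup.mk (BSrel m) (FreeGroup.of 1) = bBS m := rfl
  rw [ha, hb, mul_inv_eq_one] at h1
  exact h1

lemma BS_conj_pow (m : ℕ) : ∀ n : ℕ,
    bBS m ^ n * aBS m * (bBS m ^ n)⁻¹ = aBS m ^ (m ^ n) := by
  intro n
  induction n with
  | zero => simp
  | succ n ih =>
    have : bBS m ^ (n + 1) = bBS m * bBS m ^ n := by rw [pow_succ']
    rw [this, mul_inv_rev, pow_succ']
    calc bBS m * bBS m ^ n * aBS m * ((bBS m ^ n)⁻¹ * (bBS m)⁻¹)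
        = bBS m * (bBS m ^ n * aBS m * (bBS m ^ n)⁻¹) * (bBS m)⁻¹ := by group
      _ = bBS m * aBS m ^ (m ^ n) * (bBS m)⁻¹ := by rw [ih]
      _ = (bBS m * aBS m * (bBS m)⁻¹) ^ (m ^ n) := by rw [conj_pow]
      _ = (aBS m ^ m) ^ (m ^ n) := by rw [BS_rel]
      _ = aBS m ^ (m * m ^ n) := by rw [pow_mul]

lemma BS_part1 (m r : ℕ) : (bBS m ^ r)⁻¹ * aBS m ^ (m ^ r) * bBS m ^ r = aBS m := by
  rw [← BS_conj_pow m r]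
  group

lemma genBS_eq_range (m : ℕ) :
    genBS m = Set.range (PresentedGroup.of : Fin 2 → BS m) := by
  ext g
  constructor
  · rintro (rfl | rfl)
    exacts [⟨0, rfl⟩, ⟨1, rfl⟩]
  · rintro ⟨i, rfl⟩
    have hi : i = 0 ∨ i = 1 := by fin_cases i <;> simp
    rcases hi with rfl | rfl
    · exact Or.inl rfl
    · exact Or.inr rfl

lemma exists_list_genBS (m : ℕ) (g : BS m) :
    ∃ l : List (BS m), (∀ x ∈ l, x ∈ genBS m ∨ x⁻¹ ∈ genBS m) ∧ l.prod = g := by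
  have hg : g ∈ Subgroup.closure (genBS m) := by
    rw [genBS_eq_range, PresentedGroup.closure_range_of]
    trivial
  rw [← Subgroup.mem_toSubmonoid, Subgroup.closure_toSubmonoid] at hg
  obtain ⟨l, hl, hp⟩ := Submonoid.exists_list_of_mem_closure hg
  refine ⟨l, fun x hx => ?_, hp⟩
  rcases hl x hx with h | h
  · exact Or.inl h
  · exact Or.inr (Set.mem_inv.mp h)

lemma bexp_list_le (m : ℕ) (l : List (BS m))
    (hl : ∀ x ∈ l, x ∈ genBS m ∨ x⁻¹ ∈ genBS m) :
    |bexp m l.prod| ≤ (l.length : ℤ) := by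
  induction l with
  | nil => simp
  | cons x t ih =>
    have hx : |bexp m x| ≤ 1 := by
      rcases hl x List.mem_cons_self with (rfl | rfl) | h
      · simp
      · simp
      · rcases h with h | h
        · have : x = (aBS m)⁻¹ := by rw [← h]; simp
          rw [this]; simp
        · have : x = (bBS m)⁻¹ := by rw [← (Set.mem_singleton_iff.mp h)]; simp
          rw [this]; simp
    have ht := ih (fun y hy => hl y (List.mem_cons_of_mem x hy))
    rw [List.prod_cons, bexp_mul, List.length_cons]
    calc |bexp m x + bexp m t.prod| ≤ |bexp m x| + |bexp m t.prod| := abs_add_le _ _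
      _ ≤ 1 + t.length := by linarith
      _ = ((t.length + 1 : ℕ) : ℤ) := by push_cast; ring

lemma conj_wordLength_ge (m r : ℕ) (hm : 2 ≤ m) (g : BS m)
    (h : g⁻¹ * aBS m ^ (m ^ r) * g = aBS m) : r ≤ wordLength (genBS m) g := by
  have hb : bexp m g = r := conj_bexp m r hm g h
  set T := {n | ∃ l : List (BS m), (∀ x ∈ l, x ∈ genBS m ∨ x⁻¹ ∈ genBS m) ∧
    l.prod = g ∧ l.length = n} with hT
  have hne : T.Nonempty := by
    obtain ⟨l, hl, hp⟩ := exists_list_genBS m g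
    exact ⟨l.length, l, hl, hp, rfl⟩
  obtain ⟨l, hl, hp, hlen⟩ := Nat.sInf_mem hne
  have := bexp_list_le m l hl
  rw [hp, hb] at this
  have h2 : (r : ℤ) ≤ (l.length : ℤ) := le_trans (le_abs_self _) this
  have h3 : r ≤ l.length := by exact_mod_cast h2
  rwa [hlen] at h3

lemma wordLength_b_pow_le (m r : ℕ) : wordLength (genBS m) (bBS m ^ r) ≤ r := by
  apply Nat.sInf_le
  refine ⟨List.replicate r (bBS m), fun x hx => ?_, by simp, by simp⟩
  rw [List.eq_of_mem_replicate hx]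
  exact Or.inl (Or.inr rfl)

/-- In `BS(1,m)` with `m ≥ 2` and `r ≥ 1`: `a^(mʳ)` is conjugate to `a`; every
conjugator written as `b⁻ʲ aˡ bᵏ` satisfies `k − j = r`; and the shortest
conjugator has word length `r` (namely `bʳ`). -/
theorem stmt9 (m r : ℕ) (hm : 2 ≤ m) (hr : 1 ≤ r) :
    ((bBS m ^ r)⁻¹ * aBS m ^ (m ^ r) * bBS m ^ r = aBS m) ∧
    (∀ (j k : ℕ) (l : ℤ),
      ((bBS m)⁻¹ ^ j * aBS m ^ l * bBS m ^ k)⁻¹ * aBS m ^ (m ^ r) *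
          ((bBS m)⁻¹ ^ j * aBS m ^ l * bBS m ^ k) = aBS m →
        (k : ℤ) - (j : ℤ) = r) ∧
    sInf {c | ∃ g : BS m, g⁻¹ * aBS m ^ (m ^ r) * g = aBS m ∧
      wordLength (genBS m) g = c} = r := by

  refine ⟨BS_part1 m r, ?_, ?_⟩
  · intro j k l h
    have hb := conj_bexp m r hm _ h
    simp only [bexp_mul, bexp_pow, bexp_inv, bexp_zpow, bexp_a, bexp_b] at hb
    omega
  · have hconj : (bBS m ^ r)⁻¹ * aBS m ^ (m ^ r) * bBS m ^ r = aBS m := BS_part1 m r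
    have hbr : wordLength (genBS m) (bBS m ^ r) = r :=
      le_antisymm (wordLength_b_pow_le m r) (conj_wordLength_ge m r hm _ hconj)
    have hrU : r ∈ {c | ∃ g : BS m, g⁻¹ * aBS m ^ (m ^ r) * g = aBS m ∧
        wordLength (genBS m) g = c} := ⟨bBS m ^ r, hconj, hbr⟩
    refine le_antisymm (Nat.sInf_le hrU) ?_
    obtain ⟨g, hg, hw⟩ := Nat.sInf_mem (⟨r, hrU⟩ : Set.Nonempty _)
    rw [← hw]
    exact conj_wordLength_ge m r hm g hg
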